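/- For every γ ∈ ℝ there exists an orthogonal 5×5 real matrix O such that R_z(γ)ᵀ · Sₖ · R_z(γ) = Σ_{j=1}^{5} O_{kj} · Sⱼ for every k = 1,…,5. (The quadratic forms a ↦ aᵀSₖa transform among themselves orthogonally under R_z.) -/

import Mathlib

open Matrix Real

/-- The reference harmonic coordinates ã = (0,0,0,0,√(7/12),0,0,0,√(5/12)). -/
noncomputable def aref : Fin 9 → ℝ :=
  ![0, 0, 0, 0, Real.sqrt (7/12), 0, 0, 0, Real.sqrt (5/12)]

noncomputable def S1 : Matrix (Fin 9) (Fin 9) ℝ :=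
  Real.sqrt 2 • Matrix.diagonal ![28, 7, -8, -17, -20, -17, -8, 7, 28]

noncomputable def S2 : Matrix (Fin 9) (Fin 9) ℝ :=
  Real.sqrt 3 •
  !![0, 14, 0, 0, 0, 0, 0, 0, 0;
     14, 0, 5*Real.sqrt 7, 0, 0, 0, 0, 0, 0;
     0, 5*Real.sqrt 7, 0, 9, 0, 0, 0, 0, 0;
     0, 0, 9, 0, 0, 0, 0, 0, 0;
     0, 0, 0, 0, 0, 2*Real.sqrt 5, 0, 0, 0;
     0, 0, 0, 0, 2*Real.sqrt 5, 0, 9, 0, 0;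
     0, 0, 0, 0, 0, 9, 0, 5*Real.sqrt 7, 0;
     0, 0, 0, 0, 0, 0, 5*Real.sqrt 7, 0, 14;
     0, 0, 0, 0, 0, 0, 0, 14, 0]

noncomputable def S3 : Matrix (Fin 9) (Fin 9) ℝ :=
  Real.sqrt 3 •
  !![0, 0, 0, 0, 0, 0, 0, 14, 0;
     0, 0, 0, 0, 0, 0, 5*Real.sqrt 7, 0, -14;
     0, 0, 0, 0, 0, 9, 0, -5*Real.sqrt 7, 0;
     0, 0, 0, 0, 2*Real.sqrt 5, 0, -9, 0, 0;
     0, 0, 0, 2*Real.sqrt 5, 0, 0, 0, 0, 0;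
     0, 0, 9, 0, 0, 0, 0, 0, 0;
     0, 5*Real.sqrt 7, 0, -9, 0, 0, 0, 0, 0;
     14, 0, -5*Real.sqrt 7, 0, 0, 0, 0, 0, 0;
     0, -14, 0, 0, 0, 0, 0, 0, 0]

noncomputable def S4 : Matrix (Fin 9) (Fin 9) ℝ :=
  Real.sqrt 6 •
  !![0, 0, 2*Real.sqrt 7, 0, 0, 0, 0, 0, 0;
     0, 0, 0, 3*Real.sqrt 7, 0, 0, 0, 0, 0;
     2*Real.sqrt 7, 0, 0, 0, 0, 0, 0, 0, 0;
     0, 3*Real.sqrt 7, 0, 10, 0, 0, 0, 0, 0;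
     0, 0, 0, 0, 0, 0, 6*Real.sqrt 5, 0, 0;
     0, 0, 0, 0, 0, -10, 0, 3*Real.sqrt 7, 0;
     0, 0, 0, 0, 6*Real.sqrt 5, 0, 0, 0, 2*Real.sqrt 7;
     0, 0, 0, 0, 0, 3*Real.sqrt 7, 0, 0, 0;
     0, 0, 0, 0, 0, 0, 2*Real.sqrt 7, 0, 0]

noncomputable def S5 : Matrix (Fin 9) (Fin 9) ℝ :=
  Real.sqrt 6 •
  !![0, 0, 0, 0, 0, 0, 2*Real.sqrt 7, 0, 0;
     0, 0, 0, 0, 0, 3*Real.sqrt 7, 0, 0, 0;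
     0, 0, 0, 0, 6*Real.sqrt 5, 0, 0, 0, -2*Real.sqrt 7;
     0, 0, 0, 0, 0, -10, 0, -3*Real.sqrt 7, 0;
     0, 0, 6*Real.sqrt 5, 0, 0, 0, 0, 0, 0;
     0, 3*Real.sqrt 7, 0, -10, 0, 0, 0, 0, 0;
     2*Real.sqrt 7, 0, 0, 0, 0, 0, 0, 0, 0;
     0, 0, 0, -3*Real.sqrt 7, 0, 0, 0, 0, 0;
     0, 0, -2*Real.sqrt 7, 0, 0, 0, 0, 0, 0]

/-- The five quadric matrices S₁,…,S₅, indexed by `Fin 5`. -/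
noncomputable def S : Fin 5 → Matrix (Fin 9) (Fin 9) ℝ := ![S1, S2, S3, S4, S5]

/-- Rotation about the z-axis acting on degree-4 spherical harmonic coefficients. -/
noncomputable def Rz (γ : ℝ) : Matrix (Fin 9) (Fin 9) ℝ :=
  !![Real.cos (4*γ), 0, 0, 0, 0, 0, 0, 0, Real.sin (4*γ);
     0, Real.cos (3*γ), 0, 0, 0, 0, 0, Real.sin (3*γ), 0;
     0, 0, Real.cos (2*γ), 0, 0, 0, Real.sin (2*γ), 0, 0;
     0, 0, 0, Real.cos γ, 0, Real.sin γ, 0, 0, 0;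
     0, 0, 0, 0, 1, 0, 0, 0, 0;
     0, 0, 0, -Real.sin γ, 0, Real.cos γ, 0, 0, 0;
     0, 0, -Real.sin (2*γ), 0, 0, 0, Real.cos (2*γ), 0, 0;
     0, -Real.sin (3*γ), 0, 0, 0, 0, 0, Real.cos (3*γ), 0;
     -Real.sin (4*γ), 0, 0, 0, 0, 0, 0, 0, Real.cos (4*γ)]

/-- The quarter-turn about the x-axis, X = R_x(π/2). -/
noncomputable def Xmat : Matrix (Fin 9) (Fin 9) ℝ :=
  (1/8 : ℝ) •
  !![0, 0, 0, 0, 0, 2*Real.sqrt 14, 0, -2*Real.sqrt 2, 0;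
     0, -6, 0, 2*Real.sqrt 7, 0, 0, 0, 0, 0;
     0, 0, 0, 0, 0, 2*Real.sqrt 2, 0, 2*Real.sqrt 14, 0;
     0, 2*Real.sqrt 7, 0, 6, 0, 0, 0, 0, 0;
     0, 0, 0, 0, 3, 0, 2*Real.sqrt 5, 0, Real.sqrt 35;
     -2*Real.sqrt 14, 0, -2*Real.sqrt 2, 0, 0, 0, 0, 0, 0;
     0, 0, 0, 0, 2*Real.sqrt 5, 0, 4, 0, -2*Real.sqrt 7;
     2*Real.sqrt 2, 0, -2*Real.sqrt 14, 0, 0, 0, 0, 0, 0;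
     0, 0, 0, 0, Real.sqrt 35, 0, -2*Real.sqrt 7, 0, 1]

/-- Rotation about the y-axis: R_y(β) = X · R_z(β) · Xᵀ. -/
noncomputable def Ry (β : ℝ) : Matrix (Fin 9) (Fin 9) ℝ := Xmat * Rz β * Xmatᵀ

/-- Rotation about the x-axis: R_x(α) = R_y(π/2)ᵀ · R_z(α) · R_y(π/2). -/
noncomputable def Rx (α : ℝ) : Matrix (Fin 9) (Fin 9) ℝ :=
  (Ry (Real.pi/2))ᵀ * Rz α * Ry (Real.pi/2)

/-- The deviation measure d(a) = Σₖ (aᵀ Sₖ a)². -/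
noncomputable def dmeas (a : Fin 9 → ℝ) : ℝ :=
  ∑ k : Fin 5, (a ⬝ᵥ (S k).mulVec a) ^ 2


theorem tcc11 (γ : ℝ) : Real.cos γ * Real.cos γ = (1 + Real.cos (2*γ))/2 := by
  have h1 := Real.sin_sq_add_cos_sq (1*γ); have h2 := Real.cos_add (1*γ) (1*γ)
  ring_nf at h1 h2 ⊢
  linarith

theorem tss11 (γ : ℝ) : Real.sin γ * Real.sin γ = (1 - Real.cos (2*γ))/2 := by
  have h1 := Real.sin_sq_add_cos_sq (1*γ); have h2 := Real.cos_add (1*γ) (1*γ)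
  ring_nf at h1 h2 ⊢
  linarith

theorem tsc11 (γ : ℝ) : Real.sin γ * Real.cos γ = (0 + Real.sin (2*γ))/2 := by
  have h1 := Real.sin_sq_add_cos_sq (1*γ); have h2 := Real.sin_add (1*γ) (1*γ)
  ring_nf at h1 h2 ⊢
  linarith

theorem tcs11 (γ : ℝ) : Real.cos γ * Real.sin γ = (0 + Real.sin (2*γ))/2 := by
  have h1 := Real.sin_sq_add_cos_sq (1*γ); have h2 := Real.sin_add (1*γ) (1*γ)
  ring_nf at h1 h2 ⊢
  linarith

theorem tcc12 (γ : ℝ) : Real.cos γ * Real.cos (2*γ) = (Real.cos γ + Real.cos (3*γ))/2 := by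
  have h1 := Real.cos_sub (2*γ) (1*γ); have h2 := Real.cos_add (1*γ) (2*γ)
  ring_nf at h1 h2 ⊢
  linarith

theorem tss12 (γ : ℝ) : Real.sin γ * Real.sin (2*γ) = (Real.cos γ - Real.cos (3*γ))/2 := by
  have h1 := Real.cos_sub (2*γ) (1*γ); have h2 := Real.cos_add (1*γ) (2*γ)
  ring_nf at h1 h2 ⊢
  linarith

theorem tsc12 (γ : ℝ) : Real.sin γ * Real.cos (2*γ) = (Real.sin (3*γ) - Real.sin γ)/2 := by
  have h1 := Real.sin_sub (2*γ) (1*γ); have h2 := Real.sin_add (1*γ) (2*γ)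
  ring_nf at h1 h2 ⊢
  linarith

theorem tcs21 (γ : ℝ) : Real.cos (2*γ) * Real.sin γ = (Real.sin (3*γ) - Real.sin γ)/2 := by
  have h1 := Real.sin_sub (2*γ) (1*γ); have h2 := Real.sin_add (1*γ) (2*γ)
  ring_nf at h1 h2 ⊢
  linarith

theorem tcc13 (γ : ℝ) : Real.cos γ * Real.cos (3*γ) = (Real.cos (2*γ) + Real.cos (4*γ))/2 := by
  have h1 := Real.cos_sub (3*γ) (1*γ); have h2 := Real.cos_add (1*γ) (3*γ)
  ring_nf at h1 h2 ⊢
  linarith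

theorem tss13 (γ : ℝ) : Real.sin γ * Real.sin (3*γ) = (Real.cos (2*γ) - Real.cos (4*γ))/2 := by
  have h1 := Real.cos_sub (3*γ) (1*γ); have h2 := Real.cos_add (1*γ) (3*γ)
  ring_nf at h1 h2 ⊢
  linarith

theorem tsc13 (γ : ℝ) : Real.sin γ * Real.cos (3*γ) = (Real.sin (4*γ) - Real.sin (2*γ))/2 := by
  have h1 := Real.sin_sub (3*γ) (1*γ); have h2 := Real.sin_add (1*γ) (3*γ)
  ring_nf at h1 h2 ⊢
  linarith

theorem tcs31 (γ : ℝ) : Real.cos (3*γ) * Real.sin γ = (Real.sin (4*γ) - Real.sin (2*γ))/2 := by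
  have h1 := Real.sin_sub (3*γ) (1*γ); have h2 := Real.sin_add (1*γ) (3*γ)
  ring_nf at h1 h2 ⊢
  linarith

theorem tcc14 (γ : ℝ) : Real.cos γ * Real.cos (4*γ) = (Real.cos (3*γ) + Real.cos (5*γ))/2 := by
  have h1 := Real.cos_sub (4*γ) (1*γ); have h2 := Real.cos_add (1*γ) (4*γ)
  ring_nf at h1 h2 ⊢
  linarith

theorem tss14 (γ : ℝ) : Real.sin γ * Real.sin (4*γ) = (Real.cos (3*γ) - Real.cos (5*γ))/2 := by
  have h1 := Real.cos_sub (4*γ) (1*γ); have h2 := Real.cos_add (1*γ) (4*γ)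
  ring_nf at h1 h2 ⊢
  linarith

theorem tsc14 (γ : ℝ) : Real.sin γ * Real.cos (4*γ) = (Real.sin (5*γ) - Real.sin (3*γ))/2 := by
  have h1 := Real.sin_sub (4*γ) (1*γ); have h2 := Real.sin_add (1*γ) (4*γ)
  ring_nf at h1 h2 ⊢
  linarith

theorem tcs41 (γ : ℝ) : Real.cos (4*γ) * Real.sin γ = (Real.sin (5*γ) - Real.sin (3*γ))/2 := by
  have h1 := Real.sin_sub (4*γ) (1*γ); have h2 := Real.sin_add (1*γ) (4*γ)
  ring_nf at h1 h2 ⊢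
  linarith

theorem tcc21 (γ : ℝ) : Real.cos (2*γ) * Real.cos γ = (Real.cos γ + Real.cos (3*γ))/2 := by
  have h1 := Real.cos_sub (2*γ) (1*γ); have h2 := Real.cos_add (2*γ) (1*γ)
  ring_nf at h1 h2 ⊢
  linarith

theorem tss21 (γ : ℝ) : Real.sin (2*γ) * Real.sin γ = (Real.cos γ - Real.cos (3*γ))/2 := by
  have h1 := Real.cos_sub (2*γ) (1*γ); have h2 := Real.cos_add (2*γ) (1*γ)
  ring_nf at h1 h2 ⊢
  linarith

theorem tsc21 (γ : ℝ) : Real.sin (2*γ) * Real.cos γ = (Real.sin γ + Real.sin (3*γ))/2 := by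
  have h1 := Real.sin_sub (2*γ) (1*γ); have h2 := Real.sin_add (2*γ) (1*γ)
  ring_nf at h1 h2 ⊢
  linarith

theorem tcs12 (γ : ℝ) : Real.cos γ * Real.sin (2*γ) = (Real.sin γ + Real.sin (3*γ))/2 := by
  have h1 := Real.sin_sub (2*γ) (1*γ); have h2 := Real.sin_add (2*γ) (1*γ)
  ring_nf at h1 h2 ⊢
  linarith

theorem tcc22 (γ : ℝ) : Real.cos (2*γ) * Real.cos (2*γ) = (1 + Real.cos (4*γ))/2 := by
  have h1 := Real.sin_sq_add_cos_sq (2*γ); have h2 := Real.cos_add (2*γ) (2*γ)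
  ring_nf at h1 h2 ⊢
  linarith

theorem tss22 (γ : ℝ) : Real.sin (2*γ) * Real.sin (2*γ) = (1 - Real.cos (4*γ))/2 := by
  have h1 := Real.sin_sq_add_cos_sq (2*γ); have h2 := Real.cos_add (2*γ) (2*γ)
  ring_nf at h1 h2 ⊢
  linarith

theorem tsc22 (γ : ℝ) : Real.sin (2*γ) * Real.cos (2*γ) = (0 + Real.sin (4*γ))/2 := by
  have h1 := Real.sin_sq_add_cos_sq (2*γ); have h2 := Real.sin_add (2*γ) (2*γ)
  ring_nf at h1 h2 ⊢
  linarith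

theorem tcs22 (γ : ℝ) : Real.cos (2*γ) * Real.sin (2*γ) = (0 + Real.sin (4*γ))/2 := by
  have h1 := Real.sin_sq_add_cos_sq (2*γ); have h2 := Real.sin_add (2*γ) (2*γ)
  ring_nf at h1 h2 ⊢
  linarith

theorem tcc23 (γ : ℝ) : Real.cos (2*γ) * Real.cos (3*γ) = (Real.cos γ + Real.cos (5*γ))/2 := by
  have h1 := Real.cos_sub (3*γ) (2*γ); have h2 := Real.cos_add (2*γ) (3*γ)
  ring_nf at h1 h2 ⊢
  linarith

theorem tss23 (γ : ℝ) : Real.sin (2*γ) * Real.sin (3*γ) = (Real.cos γ - Real.cos (5*γ))/2 := by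
  have h1 := Real.cos_sub (3*γ) (2*γ); have h2 := Real.cos_add (2*γ) (3*γ)
  ring_nf at h1 h2 ⊢
  linarith

theorem tsc23 (γ : ℝ) : Real.sin (2*γ) * Real.cos (3*γ) = (Real.sin (5*γ) - Real.sin γ)/2 := by
  have h1 := Real.sin_sub (3*γ) (2*γ); have h2 := Real.sin_add (2*γ) (3*γ)
  ring_nf at h1 h2 ⊢
  linarith

theorem tcs32 (γ : ℝ) : Real.cos (3*γ) * Real.sin (2*γ) = (Real.sin (5*γ) - Real.sin γ)/2 := by
  have h1 := Real.sin_sub (3*γ) (2*γ); have h2 := Real.sin_add (2*γ) (3*γ)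
  ring_nf at h1 h2 ⊢
  linarith

theorem tcc24 (γ : ℝ) : Real.cos (2*γ) * Real.cos (4*γ) = (Real.cos (2*γ) + Real.cos (6*γ))/2 := by
  have h1 := Real.cos_sub (4*γ) (2*γ); have h2 := Real.cos_add (2*γ) (4*γ)
  ring_nf at h1 h2 ⊢
  linarith

theorem tss24 (γ : ℝ) : Real.sin (2*γ) * Real.sin (4*γ) = (Real.cos (2*γ) - Real.cos (6*γ))/2 := by
  have h1 := Real.cos_sub (4*γ) (2*γ); have h2 := Real.cos_add (2*γ) (4*γ)
  ring_nf at h1 h2 ⊢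
  linarith

theorem tsc24 (γ : ℝ) : Real.sin (2*γ) * Real.cos (4*γ) = (Real.sin (6*γ) - Real.sin (2*γ))/2 := by
  have h1 := Real.sin_sub (4*γ) (2*γ); have h2 := Real.sin_add (2*γ) (4*γ)
  ring_nf at h1 h2 ⊢
  linarith

theorem tcs42 (γ : ℝ) : Real.cos (4*γ) * Real.sin (2*γ) = (Real.sin (6*γ) - Real.sin (2*γ))/2 := by
  have h1 := Real.sin_sub (4*γ) (2*γ); have h2 := Real.sin_add (2*γ) (4*γ)
  ring_nf at h1 h2 ⊢
  linarith

theorem tcc31 (γ : ℝ) : Real.cos (3*γ) * Real.cos γ = (Real.cos (2*γ) + Real.cos (4*γ))/2 := by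
  have h1 := Real.cos_sub (3*γ) (1*γ); have h2 := Real.cos_add (3*γ) (1*γ)
  ring_nf at h1 h2 ⊢
  linarith

theorem tss31 (γ : ℝ) : Real.sin (3*γ) * Real.sin γ = (Real.cos (2*γ) - Real.cos (4*γ))/2 := by
  have h1 := Real.cos_sub (3*γ) (1*γ); have h2 := Real.cos_add (3*γ) (1*γ)
  ring_nf at h1 h2 ⊢
  linarith

theorem tsc31 (γ : ℝ) : Real.sin (3*γ) * Real.cos γ = (Real.sin (2*γ) + Real.sin (4*γ))/2 := by
  have h1 := Real.sin_sub (3*γ) (1*γ); have h2 := Real.sin_add (3*γ) (1*γ)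
  ring_nf at h1 h2 ⊢
  linarith

theorem tcs13 (γ : ℝ) : Real.cos γ * Real.sin (3*γ) = (Real.sin (2*γ) + Real.sin (4*γ))/2 := by
  have h1 := Real.sin_sub (3*γ) (1*γ); have h2 := Real.sin_add (3*γ) (1*γ)
  ring_nf at h1 h2 ⊢
  linarith

theorem tcc32 (γ : ℝ) : Real.cos (3*γ) * Real.cos (2*γ) = (Real.cos γ + Real.cos (5*γ))/2 := by
  have h1 := Real.cos_sub (3*γ) (2*γ); have h2 := Real.cos_add (3*γ) (2*γ)
  ring_nf at h1 h2 ⊢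
  linarith

theorem tss32 (γ : ℝ) : Real.sin (3*γ) * Real.sin (2*γ) = (Real.cos γ - Real.cos (5*γ))/2 := by
  have h1 := Real.cos_sub (3*γ) (2*γ); have h2 := Real.cos_add (3*γ) (2*γ)
  ring_nf at h1 h2 ⊢
  linarith

theorem tsc32 (γ : ℝ) : Real.sin (3*γ) * Real.cos (2*γ) = (Real.sin γ + Real.sin (5*γ))/2 := by
  have h1 := Real.sin_sub (3*γ) (2*γ); have h2 := Real.sin_add (3*γ) (2*γ)
  ring_nf at h1 h2 ⊢
  linarith

theorem tcs23 (γ : ℝ) : Real.cos (2*γ) * Real.sin (3*γ) = (Real.sin γ + Real.sin (5*γ))/2 := by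
  have h1 := Real.sin_sub (3*γ) (2*γ); have h2 := Real.sin_add (3*γ) (2*γ)
  ring_nf at h1 h2 ⊢
  linarith

theorem tcc33 (γ : ℝ) : Real.cos (3*γ) * Real.cos (3*γ) = (1 + Real.cos (6*γ))/2 := by
  have h1 := Real.sin_sq_add_cos_sq (3*γ); have h2 := Real.cos_add (3*γ) (3*γ)
  ring_nf at h1 h2 ⊢
  linarith

theorem tss33 (γ : ℝ) : Real.sin (3*γ) * Real.sin (3*γ) = (1 - Real.cos (6*γ))/2 := by
  have h1 := Real.sin_sq_add_cos_sq (3*γ); have h2 := Real.cos_add (3*γ) (3*γ)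
  ring_nf at h1 h2 ⊢
  linarith

theorem tsc33 (γ : ℝ) : Real.sin (3*γ) * Real.cos (3*γ) = (0 + Real.sin (6*γ))/2 := by
  have h1 := Real.sin_sq_add_cos_sq (3*γ); have h2 := Real.sin_add (3*γ) (3*γ)
  ring_nf at h1 h2 ⊢
  linarith

theorem tcs33 (γ : ℝ) : Real.cos (3*γ) * Real.sin (3*γ) = (0 + Real.sin (6*γ))/2 := by
  have h1 := Real.sin_sq_add_cos_sq (3*γ); have h2 := Real.sin_add (3*γ) (3*γ)
  ring_nf at h1 h2 ⊢
  linarith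

theorem tcc34 (γ : ℝ) : Real.cos (3*γ) * Real.cos (4*γ) = (Real.cos γ + Real.cos (7*γ))/2 := by
  have h1 := Real.cos_sub (4*γ) (3*γ); have h2 := Real.cos_add (3*γ) (4*γ)
  ring_nf at h1 h2 ⊢
  linarith

theorem tss34 (γ : ℝ) : Real.sin (3*γ) * Real.sin (4*γ) = (Real.cos γ - Real.cos (7*γ))/2 := by
  have h1 := Real.cos_sub (4*γ) (3*γ); have h2 := Real.cos_add (3*γ) (4*γ)
  ring_nf at h1 h2 ⊢
  linarith

theorem tsc34 (γ : ℝ) : Real.sin (3*γ) * Real.cos (4*γ) = (Real.sin (7*γ) - Real.sin γ)/2 := by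
  have h1 := Real.sin_sub (4*γ) (3*γ); have h2 := Real.sin_add (3*γ) (4*γ)
  ring_nf at h1 h2 ⊢
  linarith

theorem tcs43 (γ : ℝ) : Real.cos (4*γ) * Real.sin (3*γ) = (Real.sin (7*γ) - Real.sin γ)/2 := by
  have h1 := Real.sin_sub (4*γ) (3*γ); have h2 := Real.sin_add (3*γ) (4*γ)
  ring_nf at h1 h2 ⊢
  linarith

theorem tcc41 (γ : ℝ) : Real.cos (4*γ) * Real.cos γ = (Real.cos (3*γ) + Real.cos (5*γ))/2 := by
  have h1 := Real.cos_sub (4*γ) (1*γ); have h2 := Real.cos_add (4*γ) (1*γ)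
  ring_nf at h1 h2 ⊢
  linarith

theorem tss41 (γ : ℝ) : Real.sin (4*γ) * Real.sin γ = (Real.cos (3*γ) - Real.cos (5*γ))/2 := by
  have h1 := Real.cos_sub (4*γ) (1*γ); have h2 := Real.cos_add (4*γ) (1*γ)
  ring_nf at h1 h2 ⊢
  linarith

theorem tsc41 (γ : ℝ) : Real.sin (4*γ) * Real.cos γ = (Real.sin (3*γ) + Real.sin (5*γ))/2 := by
  have h1 := Real.sin_sub (4*γ) (1*γ); have h2 := Real.sin_add (4*γ) (1*γ)
  ring_nf at h1 h2 ⊢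
  linarith

theorem tcs14 (γ : ℝ) : Real.cos γ * Real.sin (4*γ) = (Real.sin (3*γ) + Real.sin (5*γ))/2 := by
  have h1 := Real.sin_sub (4*γ) (1*γ); have h2 := Real.sin_add (4*γ) (1*γ)
  ring_nf at h1 h2 ⊢
  linarith

theorem tcc42 (γ : ℝ) : Real.cos (4*γ) * Real.cos (2*γ) = (Real.cos (2*γ) + Real.cos (6*γ))/2 := by
  have h1 := Real.cos_sub (4*γ) (2*γ); have h2 := Real.cos_add (4*γ) (2*γ)
  ring_nf at h1 h2 ⊢
  linarith

theorem tss42 (γ : ℝ) : Real.sin (4*γ) * Real.sin (2*γ) = (Real.cos (2*γ) - Real.cos (6*γ))/2 := by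
  have h1 := Real.cos_sub (4*γ) (2*γ); have h2 := Real.cos_add (4*γ) (2*γ)
  ring_nf at h1 h2 ⊢
  linarith

theorem tsc42 (γ : ℝ) : Real.sin (4*γ) * Real.cos (2*γ) = (Real.sin (2*γ) + Real.sin (6*γ))/2 := by
  have h1 := Real.sin_sub (4*γ) (2*γ); have h2 := Real.sin_add (4*γ) (2*γ)
  ring_nf at h1 h2 ⊢
  linarith

theorem tcs24 (γ : ℝ) : Real.cos (2*γ) * Real.sin (4*γ) = (Real.sin (2*γ) + Real.sin (6*γ))/2 := by
  have h1 := Real.sin_sub (4*γ) (2*γ); have h2 := Real.sin_add (4*γ) (2*γ)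
  ring_nf at h1 h2 ⊢
  linarith

theorem tcc43 (γ : ℝ) : Real.cos (4*γ) * Real.cos (3*γ) = (Real.cos γ + Real.cos (7*γ))/2 := by
  have h1 := Real.cos_sub (4*γ) (3*γ); have h2 := Real.cos_add (4*γ) (3*γ)
  ring_nf at h1 h2 ⊢
  linarith

theorem tss43 (γ : ℝ) : Real.sin (4*γ) * Real.sin (3*γ) = (Real.cos γ - Real.cos (7*γ))/2 := by
  have h1 := Real.cos_sub (4*γ) (3*γ); have h2 := Real.cos_add (4*γ) (3*γ)
  ring_nf at h1 h2 ⊢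
  linarith

theorem tsc43 (γ : ℝ) : Real.sin (4*γ) * Real.cos (3*γ) = (Real.sin γ + Real.sin (7*γ))/2 := by
  have h1 := Real.sin_sub (4*γ) (3*γ); have h2 := Real.sin_add (4*γ) (3*γ)
  ring_nf at h1 h2 ⊢
  linarith

theorem tcs34 (γ : ℝ) : Real.cos (3*γ) * Real.sin (4*γ) = (Real.sin γ + Real.sin (7*γ))/2 := by
  have h1 := Real.sin_sub (4*γ) (3*γ); have h2 := Real.sin_add (4*γ) (3*γ)
  ring_nf at h1 h2 ⊢
  linarith

theorem tcc44 (γ : ℝ) : Real.cos (4*γ) * Real.cos (4*γ) = (1 + Real.cos (8*γ))/2 := by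
  have h1 := Real.sin_sq_add_cos_sq (4*γ); have h2 := Real.cos_add (4*γ) (4*γ)
  ring_nf at h1 h2 ⊢
  linarith

theorem tss44 (γ : ℝ) : Real.sin (4*γ) * Real.sin (4*γ) = (1 - Real.cos (8*γ))/2 := by
  have h1 := Real.sin_sq_add_cos_sq (4*γ); have h2 := Real.cos_add (4*γ) (4*γ)
  ring_nf at h1 h2 ⊢
  linarith

theorem tsc44 (γ : ℝ) : Real.sin (4*γ) * Real.cos (4*γ) = (0 + Real.sin (8*γ))/2 := by
  have h1 := Real.sin_sq_add_cos_sq (4*γ); have h2 := Real.sin_add (4*γ) (4*γ)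
  ring_nf at h1 h2 ⊢
  linarith

theorem tcs44 (γ : ℝ) : Real.cos (4*γ) * Real.sin (4*γ) = (0 + Real.sin (8*γ))/2 := by
  have h1 := Real.sin_sq_add_cos_sq (4*γ); have h2 := Real.sin_add (4*γ) (4*γ)
  ring_nf at h1 h2 ⊢
  linarith

theorem tc21 (γ : ℝ) : Real.cos γ ^ 2 = (1 + Real.cos (2*γ))/2 := by
  have h1 := Real.cos_add (1*γ) (1*γ); have h2 := Real.sin_sq_add_cos_sq (1*γ)
  ring_nf at h1 h2 ⊢; linarith

theorem ts21 (γ : ℝ) : Real.sin γ ^ 2 = (1 - Real.cos (2*γ))/2 := by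
  have h1 := Real.cos_add (1*γ) (1*γ); have h2 := Real.sin_sq_add_cos_sq (1*γ)
  ring_nf at h1 h2 ⊢; linarith

theorem tc22 (γ : ℝ) : Real.cos (2*γ) ^ 2 = (1 + Real.cos (4*γ))/2 := by
  have h1 := Real.cos_add (2*γ) (2*γ); have h2 := Real.sin_sq_add_cos_sq (2*γ)
  ring_nf at h1 h2 ⊢; linarith

theorem ts22 (γ : ℝ) : Real.sin (2*γ) ^ 2 = (1 - Real.cos (4*γ))/2 := by
  have h1 := Real.cos_add (2*γ) (2*γ); have h2 := Real.sin_sq_add_cos_sq (2*γ)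
  ring_nf at h1 h2 ⊢; linarith

theorem tc23 (γ : ℝ) : Real.cos (3*γ) ^ 2 = (1 + Real.cos (6*γ))/2 := by
  have h1 := Real.cos_add (3*γ) (3*γ); have h2 := Real.sin_sq_add_cos_sq (3*γ)
  ring_nf at h1 h2 ⊢; linarith

theorem ts23 (γ : ℝ) : Real.sin (3*γ) ^ 2 = (1 - Real.cos (6*γ))/2 := by
  have h1 := Real.cos_add (3*γ) (3*γ); have h2 := Real.sin_sq_add_cos_sq (3*γ)
  ring_nf at h1 h2 ⊢; linarith

theorem tc24 (γ : ℝ) : Real.cos (4*γ) ^ 2 = (1 + Real.cos (8*γ))/2 := by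
  have h1 := Real.cos_add (4*γ) (4*γ); have h2 := Real.sin_sq_add_cos_sq (4*γ)
  ring_nf at h1 h2 ⊢; linarith

theorem ts24 (γ : ℝ) : Real.sin (4*γ) ^ 2 = (1 - Real.cos (8*γ))/2 := by
  have h1 := Real.cos_add (4*γ) (4*γ); have h2 := Real.sin_sq_add_cos_sq (4*γ)
  ring_nf at h1 h2 ⊢; linarith


noncomputable def rzdd (γ : ℝ) (i : Fin 9) : ℝ := Real.cos ((4 - (i:ℕ) : ℝ) * γ)
noncomputable def rzss (γ : ℝ) (i : Fin 9) : ℝ := Real.sin ((4 - (i:ℕ) : ℝ) * γ)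

set_option maxHeartbeats 1600000 in
theorem rz_struct (γ : ℝ) : Rz γ = Matrix.of (fun k j =>
    (if k = j then rzdd γ j else 0) + (if k = Fin.rev j then -rzss γ j else 0)) := by
  ext i j
  fin_cases i <;> fin_cases j <;>
    (norm_num [Rz, rzdd, rzss, Fin.rev, Real.cos_neg, Real.sin_neg, neg_mul, one_mul] <;>
     norm_num [Fin.ext_iff])

set_option maxHeartbeats 1600000 in
theorem rz_conj (γ : ℝ) (M : Matrix (Fin 9) (Fin 9) ℝ) (i j : Fin 9) :
    ((Rz γ)ᵀ * M * Rz γ) i j =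
      rzdd γ i * rzdd γ j * M i j - rzdd γ i * rzss γ j * M i (Fin.rev j)
      - rzss γ i * rzdd γ j * M (Fin.rev i) j
      + rzss γ i * rzss γ j * M (Fin.rev i) (Fin.rev j) := by
  rw [rz_struct]
  simp only [Matrix.mul_apply, Matrix.transpose_apply, Matrix.of_apply, ite_mul, zero_mul,
    add_mul, mul_add, mul_ite, mul_zero, neg_mul, mul_neg, Finset.sum_add_distrib,
    Finset.sum_neg_distrib, Finset.sum_ite_eq, Finset.sum_ite_eq', Finset.mem_univ, if_true]
  ring

set_option maxHeartbeats 4000000 in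
/-- the quadratic forms Sₖ transform among themselves orthogonally under R_z. -/
theorem stmt_6 (γ : ℝ) :
    ∃ O : Matrix (Fin 5) (Fin 5) ℝ, O * Oᵀ = 1 ∧
      ∀ k : Fin 5, (Rz γ)ᵀ * S k * Rz γ = ∑ j : Fin 5, O k j • S j := by
  refine ⟨!![1, 0, 0, 0, 0;
             0, Real.cos γ, -Real.sin γ, 0, 0;
             0, Real.sin γ, Real.cos γ, 0, 0;
             0, 0, 0, Real.cos (2*γ), -Real.sin (2*γ);
             0, 0, 0, Real.sin (2*γ), Real.cos (2*γ)], ?_, ?_⟩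
  · ext i j
    fin_cases i <;> fin_cases j <;>
      (simp only [Matrix.mul_apply, Matrix.transpose_apply, Fin.sum_univ_five];
       norm_num [Matrix.one_apply, Matrix.cons_val_two, Matrix.cons_val_three, Matrix.cons_val_four, Matrix.vecHead, Matrix.vecTail, Fin.ext_iff, Matrix.cons_val_zero, Matrix.cons_val_one,
         Matrix.head_cons, Matrix.cons_val_succ, Matrix.cons_val_succ', Matrix.cons_val_zero',
         Matrix.of_apply]) <;>
      first
        | linear_combination Real.sin_sq_add_cos_sq γ
        | linear_combination Real.sin_sq_add_cos_sq (2*γ)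
        | linear_combination (-1 : ℝ) * Real.sin_sq_add_cos_sq γ
        | linear_combination (-1 : ℝ) * Real.sin_sq_add_cos_sq (2*γ)
        | ring
  · intro k
    fin_cases k <;>
      (rw [Fin.sum_univ_five];
       norm_num [S, Matrix.cons_val_two, Matrix.cons_val_three, Matrix.cons_val_four, Matrix.vecHead, Matrix.vecTail, Matrix.cons_val_zero, Matrix.cons_val_one, Matrix.head_cons,
         Matrix.cons_val_succ, Matrix.cons_val_succ', Matrix.cons_val_zero', Matrix.of_apply,
         Matrix.empty_val', Matrix.cons_val_fin_one]) <;>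
    (ext i j;
     rw [rz_conj];
     fin_cases i <;> fin_cases j <;>
      (norm_num [rzdd, rzss, Fin.rev, Real.sin_neg, Real.cos_neg, neg_mul, one_mul] <;>
       (try simp only [tcc11, tss11, tsc11, tcs11, tcc12, tss12, tsc12, tcs21, tcc13, tss13, tsc13, tcs31, tcc14, tss14, tsc14, tcs41, tcc21, tss21, tsc21, tcs12, tcc22, tss22, tsc22, tcs22, tcc23, tss23, tsc23, tcs32, tcc24, tss24, tsc24, tcs42, tcc31, tss31, tsc31, tcs13, tcc32, tss32, tsc32, tcs23, tcc33, tss33, tsc33, tcs33, tcc34, tss34, tsc34, tcs43, tcc41, tss41, tsc41, tcs14, tcc42, tss42, tsc42, tcs24, tcc43, tss43, tsc43, tcs34, tcc44, tss44, tsc44, tcs44, tc21, ts21, tc22, ts22, tc23, ts23, tc24, ts24]) <;>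
       norm_num [S1, S2, S3, S4, S5, Matrix.smul_apply, Matrix.add_apply, Matrix.sub_apply,
         Matrix.neg_apply, smul_eq_mul, Matrix.cons_val_zero, Matrix.cons_val_one,
         Matrix.head_cons, Matrix.cons_val_succ, Matrix.cons_val_succ', Matrix.cons_val_zero',
         Matrix.of_apply, Matrix.diagonal_apply, Fin.ext_iff] <;>
       try ring_nf))
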